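/- Let Ω ⊆ ℂⁿ be a bounded open set and let S ⊆ Ω be relatively closed in Ω with Lebesgue measure zero. Let 0 < p < ∞ be a real number. Then the set of smooth functions φ : ℂⁿ → ℂ with compact support contained in Ω that vanish on an open neighborhood of S is dense in L^p(Ω): for every measurable u : Ω → ℂ with ∫_Ω |u|^p dV < ∞ and every ε > 0 there exists such a φ with ∫_Ω |u − φ|^p dV < ε. -/

import Mathlib

open MeasureTheory Complex

noncomputable section

/-- The `j`-th Wirtinger derivative `∂̄_j u (z)`. -/
def wirtingerDbar {n : ℕ} (u : (Fin n → ℂ) → ℂ) (j : Fin n) (z : Fin n → ℂ) : ℂ :=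
  (1 / 2 : ℂ) * (fderiv ℝ u z (Pi.single j 1) + Complex.I * fderiv ℝ u z (Pi.single j Complex.I))

/-- Coefficient of `∂̄ u` (for a `(0,s)`-form `u`) at a strictly increasing `(s+1)`-tuple `K`. -/
def dbarCoeff {n s : ℕ} (u : (Fin s → Fin n) → (Fin n → ℂ) → ℂ)
    (K : Fin (s + 1) → Fin n) (z : Fin n → ℂ) : ℂ :=
  ∑ t : Fin (s + 1), (-1 : ℂ) ^ (t : ℕ) * wirtingerDbar (u (t.removeNth K)) (K t) z

/-- A `(0,q)`-form whose coefficients are smooth and bounded on `Ω`. -/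
def SmoothBoundedForm {n : ℕ} (Ω : Set (Fin n → ℂ)) (q : ℕ)
    (F : (Fin q → Fin n) → (Fin n → ℂ) → ℂ) : Prop :=
  ∀ J : Fin q → Fin n, StrictMono J →
    ContDiffOn ℝ (⊤ : ℕ∞) (F J) Ω ∧ ∃ C : ℝ, ∀ z ∈ Ω, ‖F J z‖ ≤ C

/-- `Ω` is `L^∞`-pseudoconvex: every smooth bounded `∂̄`-closed `(0,q)`-form (`1 ≤ q ≤ n`)
has a smooth bounded `(0,q-1)`-form solving `∂̄ G = F`. -/
def LinftyPseudoconvex {n : ℕ} (Ω : Set (Fin n → ℂ)) : Prop :=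
  ∀ q : ℕ, q + 1 ≤ n →
    ∀ F : (Fin (q + 1) → Fin n) → (Fin n → ℂ) → ℂ,
      SmoothBoundedForm Ω (q + 1) F →
      (∀ K : Fin (q + 2) → Fin n, StrictMono K → ∀ z ∈ Ω, dbarCoeff F K z = 0) →
      ∃ G : (Fin q → Fin n) → (Fin n → ℂ) → ℂ,
        SmoothBoundedForm Ω q G ∧
        ∀ K : Fin (q + 1) → Fin n, StrictMono K → ∀ z ∈ Ω, dbarCoeff G K z = F K z

/-- `u ∈ H^∞(Ω)`: bounded holomorphic. -/
def BoundedHolo {n : ℕ} (Ω : Set (Fin n → ℂ)) (u : (Fin n → ℂ) → ℂ) : Prop :=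
  DifferentiableOn ℂ u Ω ∧ ∃ C : ℝ, ∀ z ∈ Ω, ‖u z‖ ≤ C

/-- Membership in the algebra `H^∞(Ω)[conj f₁,…,conj f_m]`. -/
def InHinftyAlg {n m : ℕ} (Ω : Set (Fin n → ℂ)) (f : Fin m → (Fin n → ℂ) → ℂ)
    (h : (Fin n → ℂ) → ℂ) : Prop :=
  ∃ (S : Finset (Fin m → ℕ)) (c : (Fin m → ℕ) → (Fin n → ℂ) → ℂ),
    (∀ α ∈ S, BoundedHolo Ω (c α)) ∧
    ∀ z ∈ Ω, h z = ∑ α ∈ S, c α z * ∏ j, (starRingEnd ℂ) (f j z) ^ α j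

/-- `Ω_f`: points of `Ω` that are non-isolated in their own fiber `f⁻¹(f z)`. -/
def OmegaSing {n m : ℕ} (Ω : Set (Fin n → ℂ)) (f : Fin m → (Fin n → ℂ) → ℂ) :
    Set (Fin n → ℂ) :=
  {z | z ∈ Ω ∧ ∀ U : Set (Fin n → ℂ), IsOpen U → z ∈ U →
    ∃ w, w ∈ U ∩ Ω ∧ (∀ j, f j w = f j z) ∧ w ≠ z}

/-- The complex Jacobian matrix `(∂ f_j / ∂ z_k)`. -/
def jacobianMatrix {n m : ℕ} (f : Fin m → (Fin n → ℂ) → ℂ) (z : Fin n → ℂ) :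
    Matrix (Fin m) (Fin n) ℂ :=
  Matrix.of fun j k => fderiv ℂ (f j) z (Pi.single k 1)

/-- Membership in `Γ^∞_{(r,s)}(Ω)`: smooth bounded coefficients. -/
def IsGammaInf {n m : ℕ} (r s : ℕ) (Ω : Set (Fin n → ℂ))
    (W : (Fin r → Fin m) → (Fin s → Fin n) → (Fin n → ℂ) → ℂ) : Prop :=
  ∀ I : Fin r → Fin m, StrictMono I → ∀ J : Fin s → Fin n, StrictMono J →
    ContDiffOn ℝ (⊤ : ℕ∞) (W I J) Ω ∧ ∃ C : ℝ, ∀ z ∈ Ω, ‖W I J z‖ ≤ C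

/-- Support of `W ∈ Γ^∞_{(r,s)}(Ω)`. -/
def gammaSupport {n m : ℕ} (r s : ℕ) (Ω : Set (Fin n → ℂ))
    (W : (Fin r → Fin m) → (Fin s → Fin n) → (Fin n → ℂ) → ℂ) : Set (Fin n → ℂ) :=
  closure (⋃ I : Fin r → Fin m, ⋃ J : Fin s → Fin n,
    {z | z ∈ Ω ∧ StrictMono I ∧ StrictMono J ∧ W I J z ≠ 0})

open Classical in
/-- The Koszul contraction `T_f` sending `Γ^∞_{(r,s)}` to `Γ^∞_{(r-1,s)}`:
`(T_f W)_{I,J} = Σ_{k ∉ I} (−1)^{ε(k,I)} f_k W_{I∪{k},J}`, coded by summing over the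
strictly increasing `r`-tuples `I'` obtained from `I` by inserting an element at position `t`. -/
def koszulT {n m : ℕ} (r s : ℕ) (f : Fin m → (Fin n → ℂ) → ℂ)
    (W : (Fin r → Fin m) → (Fin s → Fin n) → (Fin n → ℂ) → ℂ)
    (I : Fin (r - 1) → Fin m) (J : Fin s → Fin n) (z : Fin n → ℂ) : ℂ :=
  ∑ I' : Fin r → Fin m, ∑ t : Fin r,
    if StrictMono I' ∧ Set.range I = Set.range I' \ {I' t}
    then (-1 : ℂ) ^ (t : ℕ) * f (I' t) z * W I' J z else 0

/-- `u` is holomorphic on `Ω` and square-integrable: a representative of an element of `A²(Ω)`. -/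
def Holo2 {n : ℕ} (Ω : Set (Fin n → ℂ)) (u : (Fin n → ℂ) → ℂ) : Prop :=
  DifferentiableOn ℂ u Ω ∧ MemLp u 2 (volume.restrict Ω)


open Set Metric Function
open scoped Convolution ENNReal Pointwise

private lemma rpow_add3_le {p a b c : ℝ} (hp : 0 < p) (ha : 0 ≤ a) (hb : 0 ≤ b) (hc : 0 ≤ c) :
    (a + b + c) ^ p ≤ 3 ^ p * (a ^ p + b ^ p + c ^ p) := by
  set m := max a (max b c) with hm
  have hm0 : 0 ≤ m := le_trans ha (le_max_left _ _)
  have habc : a + b + c ≤ 3 * m := by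
    have h1 : a ≤ m := le_max_left _ _
    have h2 : b ≤ m := le_trans (le_max_left _ _) (le_max_right _ _)
    have h3 : c ≤ m := le_trans (le_max_right _ _) (le_max_right _ _)
    linarith
  have h4 : (a + b + c) ^ p ≤ (3 * m) ^ p :=
    Real.rpow_le_rpow (by linarith) habc hp.le
  have h5 : (3 * m) ^ p = 3 ^ p * m ^ p := Real.mul_rpow (by norm_num) hm0
  have h6 : m ^ p ≤ a ^ p + b ^ p + c ^ p := by
    rcases max_cases a (max b c) with ⟨he, _⟩ | ⟨he, _⟩
    · rw [hm, he]
      nlinarith [Real.rpow_nonneg hb p, Real.rpow_nonneg hc p]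
    · rcases max_cases b c with ⟨he2, _⟩ | ⟨he2, _⟩
      · rw [hm, he, he2]
        nlinarith [Real.rpow_nonneg ha p, Real.rpow_nonneg hc p]
      · rw [hm, he, he2]
        nlinarith [Real.rpow_nonneg ha p, Real.rpow_nonneg hb p]
  calc (a + b + c) ^ p ≤ 3 ^ p * m ^ p := h5 ▸ h4
    _ ≤ 3 ^ p * (a ^ p + b ^ p + c ^ p) :=
        mul_le_mul_of_nonneg_left h6 (Real.rpow_nonneg (by norm_num) p)

/-- Let `Ω ⊆ ℂⁿ` be a bounded open set and `S ⊆ Ω` relatively closed in `Ω` with Lebesgue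
measure zero, and let `0 < p < ∞`. The smooth functions with compact support contained in
`Ω` vanishing on a neighborhood of `S` are dense in `L^p(Ω)`. -/
theorem smoothVanishingDense {n : ℕ} (Ω : Set (Fin n → ℂ))
    (hΩopen : IsOpen Ω) (hΩbdd : Bornology.IsBounded Ω)
    (S : Set (Fin n → ℂ)) (hS : ∃ C : Set (Fin n → ℂ), IsClosed C ∧ S = C ∩ Ω)
    (hS0 : volume S = 0) (p : ℝ) (hp : 0 < p) :
    ∀ u : (Fin n → ℂ) → ℂ, Measurable u →
      (∫⁻ z in Ω, ENNReal.ofReal (‖u z‖ ^ p)) < ⊤ →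
      ∀ ε : ℝ, 0 < ε → ∃ φ : (Fin n → ℂ) → ℂ,
        ContDiff ℝ (⊤ : ℕ∞) φ ∧ HasCompactSupport φ ∧ tsupport φ ⊆ Ω ∧
        (∃ U : Set (Fin n → ℂ), IsOpen U ∧ S ⊆ U ∧ ∀ z ∈ U, φ z = 0) ∧
        (∫⁻ z in Ω, ENNReal.ofReal (‖u z - φ z‖ ^ p)) < ENNReal.ofReal ε := by
  obtain ⟨C, hCclosed, hSC⟩ := hS
  intro u humeas huint ε hε
  have hΩm : MeasurableSet Ω := hΩopen.measurableSet
  have hvolΩ : volume Ω < ⊤ := hΩbdd.measure_lt_top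
  have hconv : ∀ x : ℂ, ENNReal.ofReal (‖x‖ ^ p) = (‖x‖₊ : ℝ≥0∞) ^ p := by
    intro x
    rw [← ENNReal.ofReal_rpow_of_nonneg (norm_nonneg _) hp.le, ← enorm_eq_nnnorm, ofReal_norm]
  set τ : ℝ := ε / (4 * 3 ^ p) with hτdef
  have h3p : (0 : ℝ) < 3 ^ p := Real.rpow_pos_of_pos (by norm_num) p
  have hτ : 0 < τ := div_pos hε (by positivity)
  set q : ℝ≥0∞ := ENNReal.ofReal p with hqdef
  have hq0 : q ≠ 0 := (ENNReal.ofReal_pos.mpr hp).ne'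
  have hqtop : q ≠ ⊤ := ENNReal.ofReal_ne_top
  have hqtoReal : q.toReal = p := ENNReal.toReal_ofReal hp.le
  set u' : (Fin n → ℂ) → ℂ := Ω.indicator u with hu'def
  have hu'm : Measurable u' := humeas.indicator hΩm
  have hint' : (∫⁻ z, (‖u' z‖₊ : ℝ≥0∞) ^ p) = ∫⁻ z in Ω, (‖u z‖₊ : ℝ≥0∞) ^ p := by
    rw [← lintegral_indicator hΩm]
    refine lintegral_congr fun z => ?_
    by_cases hz : z ∈ Ω
    · simp [hu'def, hz]
    · simp [hu'def, hz, ENNReal.zero_rpow_of_pos hp]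
  have huint' : (∫⁻ z in Ω, (‖u z‖₊ : ℝ≥0∞) ^ p) < ⊤ := by
    refine lt_of_eq_of_lt ?_ huint
    exact (lintegral_congr fun z => (hconv (u z)).symm)
  have hmem : MemLp u' q volume := by
    refine ⟨hu'm.aestronglyMeasurable, ?_⟩
    rw [eLpNorm_eq_lintegral_rpow_enorm_toReal hq0 hqtop, hqtoReal]
    refine ENNReal.rpow_lt_top_of_nonneg (by positivity) ?_
    simp only [enorm_eq_nnnorm]
    rw [hint']
    exact huint'.ne
  obtain ⟨g, hgsupp, hgle, hgcont, -⟩ :=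
    hmem.exists_hasCompactSupport_eLpNorm_sub_le hqtop
      (ε := ENNReal.ofReal (τ ^ (1 / p)))
      (ENNReal.ofReal_pos.mpr (Real.rpow_pos_of_pos hτ _)).ne'
  have hA : (∫⁻ z in Ω, (‖u z - g z‖₊ : ℝ≥0∞) ^ p) ≤ ENNReal.ofReal τ := by
    have h1 : (∫⁻ z in Ω, (‖u z - g z‖₊ : ℝ≥0∞) ^ p)
        = ∫⁻ z in Ω, (‖u' z - g z‖₊ : ℝ≥0∞) ^ p := by
      refine setLIntegral_congr_fun hΩm (fun z hz => ?_)
      simp [hu'def, hz]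
    have h2 : (∫⁻ z in Ω, (‖u' z - g z‖₊ : ℝ≥0∞) ^ p)
        ≤ ∫⁻ z, (‖u' z - g z‖₊ : ℝ≥0∞) ^ p := setLIntegral_le_lintegral _ _
    have h3 : (∫⁻ z, (‖u' z - g z‖₊ : ℝ≥0∞) ^ p) = eLpNorm (u' - g) q volume ^ p := by
      rw [eLpNorm_eq_lintegral_rpow_enorm_toReal hq0 hqtop, hqtoReal, ← ENNReal.rpow_mul,
        one_div_mul_cancel hp.ne', ENNReal.rpow_one]
      simp only [Pi.sub_apply, enorm_eq_nnnorm]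
    have h4 : eLpNorm (u' - g) q volume ^ p ≤ (ENNReal.ofReal (τ ^ (1 / p))) ^ p :=
      ENNReal.rpow_le_rpow hgle hp.le
    have h5 : (ENNReal.ofReal (τ ^ (1 / p))) ^ p = ENNReal.ofReal τ := by
      rw [ENNReal.ofReal_rpow_of_nonneg (Real.rpow_nonneg hτ.le _) hp.le,
        ← Real.rpow_mul hτ.le, one_div_mul_cancel hp.ne', Real.rpow_one]
    rw [h1]
    exact h2.trans (le_of_le_of_eq (h3 ▸ h4) h5)
  obtain ⟨M, hM⟩ := hgsupp.exists_bound_of_continuous hgcont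
  have hM0 : 0 ≤ M := le_trans (norm_nonneg (g 0)) (hM 0)
  set s : Set (Fin n → ℂ) := Ω \ C with hsdef
  have hsopen : IsOpen s := hΩopen.sdiff hCclosed
  have hsvol : volume s ≠ ⊤ := ((measure_mono diff_subset).trans_lt hvolΩ).ne
  have hδK0 : (0 : ℝ) < τ / (M ^ p + 1) := by positivity
  obtain ⟨K, hKs, hKcomp, hKdiff⟩ :=
    hsopen.measurableSet.exists_isCompact_diff_lt hsvol
      (ENNReal.ofReal_pos.mpr hδK0).ne'
  have hΩK : volume (Ω \ K) < ENNReal.ofReal (τ / (M ^ p + 1)) := by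
    have hsub : Ω \ K ⊆ (s \ K) ∪ S := by
      intro z hz
      by_cases hzC : z ∈ C
      · exact Or.inr (hSC ▸ ⟨hzC, hz.1⟩)
      · exact Or.inl ⟨⟨hz.1, hzC⟩, hz.2⟩
    calc volume (Ω \ K) ≤ volume ((s \ K) ∪ S) := measure_mono hsub
      _ ≤ volume (s \ K) + volume S := measure_union_le _ _
      _ = volume (s \ K) := by rw [hS0, add_zero]
      _ < ENNReal.ofReal (τ / (M ^ p + 1)) := hKdiff
  have hclos : IsCompact (closure s) := (hΩbdd.subset diff_subset).isCompact_closure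
  obtain ⟨χ, hχsupp, hχ1, hχ01⟩ :=
    exists_tsupport_one_of_isOpen_isClosed hsopen hclos hKcomp.isClosed hKs
  set ψ : (Fin n → ℂ) → ℂ := fun z => χ z • g z with hψdef
  have hψcont : Continuous ψ := χ.continuous.smul hgcont
  have hψsuppg : support ψ ⊆ support g := by
    intro z hz h0
    exact hz (by simp [hψdef, h0])
  have hψcomp : HasCompactSupport ψ :=
    IsCompact.of_isClosed_subset hgsupp isClosed_closure (closure_mono hψsuppg)
  have hψsupps : tsupport ψ ⊆ s := by
    refine subset_trans ?_ hχsupp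
    refine closure_mono fun z hz => ?_
    intro h0
    exact hz (by simp [hψdef, h0])
  obtain ⟨δ₀, hδ₀pos, hδ₀⟩ := hψcomp.exists_thickening_subset_open hsopen hψsupps
  set V : ℝ := (volume Ω).toReal with hVdef
  have hV0 : 0 ≤ V := ENNReal.toReal_nonneg
  set δ₂ : ℝ := (τ / (V + 1)) ^ (1 / p) with hδ₂def
  have hδ₂pos : 0 < δ₂ := Real.rpow_pos_of_pos (by positivity) _
  have hψuc : UniformContinuous ψ := hψcomp.uniformContinuous_of_continuous hψcont
  rw [Metric.uniformContinuous_iff] at hψuc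
  obtain ⟨δ₁, hδ₁pos, hδ₁⟩ := hψuc δ₂ hδ₂pos
  set r : ℝ := min δ₀ δ₁ / 2 with hrdef
  have hrpos : 0 < r := by positivity
  have hrδ₀ : r < δ₀ := by
    have h := min_le_left δ₀ δ₁
    rw [hrdef]; linarith
  have hrδ₁ : r ≤ δ₁ := by
    have h := min_le_right δ₀ δ₁
    rw [hrdef]; linarith
  set ρ : ContDiffBump (0 : Fin n → ℂ) := ⟨r / 2, r, by positivity, by linarith⟩ with hρdef
  set φf : (Fin n → ℂ) → ℂ :=
    (ρ.normed volume) ⋆[ContinuousLinearMap.lsmul ℝ ℝ, volume] ψ with hφdef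
  have hφsm : ContDiff ℝ (⊤ : ℕ∞) φf :=
    ρ.hasCompactSupport_normed.contDiff_convolution_left _ ρ.contDiff_normed
      hψcont.locallyIntegrable
  have hρrOut : ρ.rOut = r := rfl
  have hφdist : ∀ x, dist (φf x) (ψ x) ≤ δ₂ := by
    intro x
    refine ρ.dist_normed_convolution_le hψcont.aestronglyMeasurable fun y hy => ?_
    have hyx : dist y x < δ₁ := lt_of_lt_of_le (by simpa [hρrOut] using mem_ball.mp hy) hrδ₁
    exact (hδ₁ hyx).le
  set Lψ : Set (Fin n → ℂ) := tsupport ψ with hLdef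
  have hLcomp : IsCompact Lψ := hψcomp
  have hsupp1 : support φf ⊆ ball (0 : Fin n → ℂ) r + support ψ := by
    have h := support_convolution_subset (μ := volume)
      (f := ρ.normed volume) (g := ψ) (L := ContinuousLinearMap.lsmul ℝ ℝ)
    rwa [ρ.support_normed_eq, hρrOut] at h
  have hsupp2 : tsupport φf ⊆ Metric.closedBall (0 : Fin n → ℂ) r + Lψ := by
    have hcl : IsClosed (Metric.closedBall (0 : Fin n → ℂ) r + Lψ) :=
      ((isCompact_closedBall _ _).add hLcomp).isClosed
    refine closure_minimal ?_ hcl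
    exact hsupp1.trans (Set.add_subset_add ball_subset_closedBall subset_closure)
  have hsupp3 : Metric.closedBall (0 : Fin n → ℂ) r + Lψ ⊆ thickening δ₀ Lψ := by
    rintro x ⟨a, ha, b, hb, rfl⟩
    rw [Metric.mem_thickening_iff]
    refine ⟨b, hb, ?_⟩
    have h1 : dist (a + b) b = ‖a‖ := by simp [dist_eq_norm]
    have h2 : ‖a‖ ≤ r := by simpa [Metric.mem_closedBall, dist_eq_norm] using ha
    rw [h1]; linarith
  have htsuppφ : tsupport φf ⊆ s := hsupp2.trans (hsupp3.trans hδ₀)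
  have hφcomp : HasCompactSupport φf :=
    IsCompact.of_isClosed_subset ((isCompact_closedBall _ _).add hLcomp)
      (isClosed_tsupport φf) hsupp2
  have hC : (∫⁻ z in Ω, (‖ψ z - φf z‖₊ : ℝ≥0∞) ^ p) ≤ ENNReal.ofReal τ := by
    have hpt : ∀ z, (‖ψ z - φf z‖₊ : ℝ≥0∞) ^ p ≤ ENNReal.ofReal (τ / (V + 1)) := by
      intro z
      have h1 : ‖ψ z - φf z‖ ≤ δ₂ := by
        rw [← dist_eq_norm, dist_comm]
        exact hφdist z
      calc (‖ψ z - φf z‖₊ : ℝ≥0∞) ^ p = ENNReal.ofReal (‖ψ z - φf z‖ ^ p) := (hconv _).symm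
        _ ≤ ENNReal.ofReal (δ₂ ^ p) :=
            ENNReal.ofReal_le_ofReal (Real.rpow_le_rpow (norm_nonneg _) h1 hp.le)
        _ = ENNReal.ofReal (τ / (V + 1)) := by
            rw [hδ₂def, ← Real.rpow_mul (by positivity), one_div_mul_cancel hp.ne',
              Real.rpow_one]
    calc (∫⁻ z in Ω, (‖ψ z - φf z‖₊ : ℝ≥0∞) ^ p)
        ≤ ∫⁻ _ in Ω, ENNReal.ofReal (τ / (V + 1)) := lintegral_mono hpt
      _ = ENNReal.ofReal (τ / (V + 1)) * volume Ω := setLIntegral_const _ _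
      _ ≤ ENNReal.ofReal (τ / (V + 1)) * ENNReal.ofReal (V + 1) := by
          refine mul_le_mul_right ?_ _
          calc volume Ω = ENNReal.ofReal V := (ENNReal.ofReal_toReal hvolΩ.ne).symm
            _ ≤ ENNReal.ofReal (V + 1) := ENNReal.ofReal_le_ofReal (by linarith)
      _ = ENNReal.ofReal (τ / (V + 1) * (V + 1)) := (ENNReal.ofReal_mul (by positivity)).symm
      _ = ENNReal.ofReal τ := by
          rw [div_mul_cancel₀ _ (by positivity : (V : ℝ) + 1 ≠ 0)]
  have hB : (∫⁻ z in Ω, (‖g z - ψ z‖₊ : ℝ≥0∞) ^ p) ≤ ENNReal.ofReal τ := by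
    have hpt : ∀ z, (‖g z - ψ z‖₊ : ℝ≥0∞) ^ p
        ≤ Set.indicator Kᶜ (fun _ => ENNReal.ofReal (M ^ p)) z := by
      intro z
      by_cases hz : z ∈ K
      · have hψz : ψ z = g z := by
          have h1 : χ z = 1 := hχ1 hz
          simp [hψdef, h1]
        rw [hψz, sub_self, Set.indicator_of_notMem (by simpa using hz)]
        simp [ENNReal.zero_rpow_of_pos hp]
      · rw [Set.indicator_of_mem (by simpa using hz)]
        have hb : ‖g z - ψ z‖ ≤ M := by
          have he : g z - ψ z = (1 - χ z) • g z := by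
            rw [hψdef]
            simp [sub_smul, one_smul]
          rw [he, norm_smul]
          have h01 := hχ01 z
          have habs : ‖(1 - χ z : ℝ)‖ ≤ 1 := by
            rw [Real.norm_eq_abs, abs_le]
            constructor
            · linarith [h01.2]
            · linarith [h01.1]
          calc ‖(1 - χ z : ℝ)‖ * ‖g z‖ ≤ 1 * M :=
              mul_le_mul habs (hM z) (norm_nonneg _) zero_le_one
            _ = M := one_mul M
        calc (‖g z - ψ z‖₊ : ℝ≥0∞) ^ p = ENNReal.ofReal (‖g z - ψ z‖ ^ p) := (hconv _).symm
          _ ≤ ENNReal.ofReal (M ^ p) :=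
              ENNReal.ofReal_le_ofReal (Real.rpow_le_rpow (norm_nonneg _) hb hp.le)
    calc (∫⁻ z in Ω, (‖g z - ψ z‖₊ : ℝ≥0∞) ^ p)
        ≤ ∫⁻ z in Ω, Set.indicator Kᶜ (fun _ => ENNReal.ofReal (M ^ p)) z :=
          lintegral_mono hpt
      _ = ENNReal.ofReal (M ^ p) * volume (Ω \ K) := by
          rw [lintegral_indicator hKcomp.isClosed.measurableSet.compl, setLIntegral_const,
            Measure.restrict_apply hKcomp.isClosed.measurableSet.compl,
            show Kᶜ ∩ Ω = Ω \ K by rw [Set.diff_eq, Set.inter_comm]]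
      _ ≤ ENNReal.ofReal (M ^ p) * ENNReal.ofReal (τ / (M ^ p + 1)) :=
          mul_le_mul_right hΩK.le _
      _ = ENNReal.ofReal (M ^ p * (τ / (M ^ p + 1))) :=
          (ENNReal.ofReal_mul (Real.rpow_nonneg hM0 p)).symm
      _ ≤ ENNReal.ofReal τ := by
          refine ENNReal.ofReal_le_ofReal ?_
          rw [mul_comm, div_mul_eq_mul_div, div_le_iff₀ (by positivity)]
          nlinarith [Real.rpow_nonneg hM0 p, hτ.le]
  refine ⟨φf, hφsm, hφcomp, htsuppφ.trans diff_subset, ?_, ?_⟩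
  · refine ⟨(tsupport φf)ᶜ, (isClosed_tsupport φf).isOpen_compl, ?_,
      fun z hz => image_eq_zero_of_notMem_tsupport hz⟩
    intro z hz hmemt
    exact (htsuppφ hmemt).2 (hSC ▸ hz).1
  · have key : ∀ z, ENNReal.ofReal (‖u z - φf z‖ ^ p)
        ≤ ENNReal.ofReal (3 ^ p) *
          ((‖u z - g z‖₊ : ℝ≥0∞) ^ p + (‖g z - ψ z‖₊ : ℝ≥0∞) ^ p
            + (‖ψ z - φf z‖₊ : ℝ≥0∞) ^ p) := by
      intro z
      have htri : ‖u z - φf z‖ ≤ ‖u z - g z‖ + ‖g z - ψ z‖ + ‖ψ z - φf z‖ := by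
        have he : u z - φf z = (u z - g z) + (g z - ψ z) + (ψ z - φf z) := by ring
        rw [he]
        exact (norm_add_le _ _).trans (add_le_add_left (norm_add_le _ _) _)
      calc ENNReal.ofReal (‖u z - φf z‖ ^ p)
          ≤ ENNReal.ofReal ((‖u z - g z‖ + ‖g z - ψ z‖ + ‖ψ z - φf z‖) ^ p) :=
            ENNReal.ofReal_le_ofReal (Real.rpow_le_rpow (norm_nonneg _) htri hp.le)
        _ ≤ ENNReal.ofReal (3 ^ p * (‖u z - g z‖ ^ p + ‖g z - ψ z‖ ^ p + ‖ψ z - φf z‖ ^ p)) :=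
            ENNReal.ofReal_le_ofReal
              (rpow_add3_le hp (norm_nonneg _) (norm_nonneg _) (norm_nonneg _))
        _ = ENNReal.ofReal (3 ^ p) *
            ((‖u z - g z‖₊ : ℝ≥0∞) ^ p + (‖g z - ψ z‖₊ : ℝ≥0∞) ^ p
              + (‖ψ z - φf z‖₊ : ℝ≥0∞) ^ p) := by
            rw [ENNReal.ofReal_mul h3p.le,
              ENNReal.ofReal_add (by positivity) (Real.rpow_nonneg (norm_nonneg _) p),
              ENNReal.ofReal_add (Real.rpow_nonneg (norm_nonneg _) p)
                (Real.rpow_nonneg (norm_nonneg _) p),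
              hconv, hconv, hconv]
    have hmA : Measurable fun z => (‖u z - g z‖₊ : ℝ≥0∞) ^ p :=
      ENNReal.continuous_rpow_const.measurable.comp (humeas.sub hgcont.measurable).enorm
    have hmB : Measurable fun z => (‖g z - ψ z‖₊ : ℝ≥0∞) ^ p :=
      ENNReal.continuous_rpow_const.measurable.comp
        (hgcont.measurable.sub hψcont.measurable).enorm
    calc (∫⁻ z in Ω, ENNReal.ofReal (‖u z - φf z‖ ^ p))
        ≤ ∫⁻ z in Ω, ENNReal.ofReal (3 ^ p) *
            ((‖u z - g z‖₊ : ℝ≥0∞) ^ p + (‖g z - ψ z‖₊ : ℝ≥0∞) ^ p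
              + (‖ψ z - φf z‖₊ : ℝ≥0∞) ^ p) := lintegral_mono key
      _ = ENNReal.ofReal (3 ^ p) *
          ∫⁻ z in Ω, ((‖u z - g z‖₊ : ℝ≥0∞) ^ p + (‖g z - ψ z‖₊ : ℝ≥0∞) ^ p
            + (‖ψ z - φf z‖₊ : ℝ≥0∞) ^ p) :=
          lintegral_const_mul' _ _ ENNReal.ofReal_ne_top
      _ = ENNReal.ofReal (3 ^ p) *
          ((∫⁻ z in Ω, (‖u z - g z‖₊ : ℝ≥0∞) ^ p)
            + (∫⁻ z in Ω, (‖g z - ψ z‖₊ : ℝ≥0∞) ^ p)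
            + ∫⁻ z in Ω, (‖ψ z - φf z‖₊ : ℝ≥0∞) ^ p) := by
          rw [lintegral_add_left (show Measurable fun z => (‖u z - g z‖₊ : ℝ≥0∞) ^ p + (‖g z - ψ z‖₊ : ℝ≥0∞) ^ p from hmA.add hmB), lintegral_add_left hmA]
      _ ≤ ENNReal.ofReal (3 ^ p) * (ENNReal.ofReal τ + ENNReal.ofReal τ + ENNReal.ofReal τ) :=
          mul_le_mul_right (add_le_add (add_le_add hA hB) hC) _
      _ = ENNReal.ofReal (3 ^ p * (τ + τ + τ)) := by
          rw [← ENNReal.ofReal_add hτ.le hτ.le, ← ENNReal.ofReal_add (by linarith) hτ.le,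
            ← ENNReal.ofReal_mul h3p.le]
      _ < ENNReal.ofReal ε := by
          rw [ENNReal.ofReal_lt_ofReal_iff hε]
          have he : 3 ^ p * (τ + τ + τ) = 3 / 4 * ε := by
            rw [hτdef]
            field_simp
            ring
          rw [he]; linarith


end
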